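/- Let f : ℝ⁴ → ℝ be given by f(x,u,p,q) = (6p/u + 3/x)·q − 6p³/u² − 6p²/(x·u) − 6p/x² − 6u/x³ on the open set where x ≠ 0 and u ≠ 0. Then the function a₂(x,u,p) = −2p/(x·u³) − 1/(x²·u²) satisfies on this set the equation D_x a₂ = (1/2)·x·u²·a₂² + 4p²/(x·u⁴) + 2p/(x²·u³) + (3/2)/(x³·u²) − 2q/(x·u³). -/

import Mathlib

/-- Partial derivative with respect to the first variable `x`. -/
noncomputable def pX (g : ℝ → ℝ → ℝ → ℝ → ℝ) (x u p q : ℝ) : ℝ :=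
  deriv (fun t => g t u p q) x

/-- Partial derivative with respect to the second variable `u`. -/
noncomputable def pU (g : ℝ → ℝ → ℝ → ℝ → ℝ) (x u p q : ℝ) : ℝ :=
  deriv (fun t => g x t p q) u

/-- Partial derivative with respect to the third variable `p`. -/
noncomputable def pP (g : ℝ → ℝ → ℝ → ℝ → ℝ) (x u p q : ℝ) : ℝ :=
  deriv (fun t => g x u t q) p

/-- Partial derivative with respect to the fourth variable `q`. -/
noncomputable def pQ (g : ℝ → ℝ → ℝ → ℝ → ℝ) (x u p q : ℝ) : ℝ :=
  deriv (fun t => g x u p t) q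

/-- The total derivative operator
`D_x = ∂/∂x + p ∂/∂u + q ∂/∂p + f ∂/∂q` associated with the ODE `u''' = f`. -/
noncomputable def Dx (f g : ℝ → ℝ → ℝ → ℝ → ℝ) : ℝ → ℝ → ℝ → ℝ → ℝ :=
  fun x u p q =>
    pX g x u p q + p * pU g x u p q + q * pP g x u p q + f x u p q * pQ g x u p q

/-- The right hand side of the nonlinear ODE of Example 3.1:
`u''' = (6u'/u + 3/x)u'' − 6u'³/u² − 6u'²/(xu) − 6u'/x² − 6u/x³`. -/
noncomputable def f : ℝ → ℝ → ℝ → ℝ → ℝ := fun x u p q =>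
  (6 * p / u + 3 / x) * q - 6 * p ^ 3 / u ^ 2 - 6 * p ^ 2 / (x * u)
    - 6 * p / x ^ 2 - 6 * u / x ^ 3

/-- Auxiliary function `a₂(x,u,p) = −2p/(xu³) − 1/(x²u²)`. -/
noncomputable def a2 : ℝ → ℝ → ℝ → ℝ → ℝ := fun x u p _q =>
  -(2 * p) / (x * u ^ 3) - 1 / (x ^ 2 * u ^ 2)

lemma pX_a2 (x u p q : ℝ) (hx : x ≠ 0) (hu : u ≠ 0) :
    pX a2 x u p q = 2 * p / (x ^ 2 * u ^ 3) + 2 / (x ^ 3 * u ^ 2) := by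
  have h1 : HasDerivAt (fun t : ℝ => -(2 * p) / (t * u ^ 3))
      (2 * p / (x ^ 2 * u ^ 3)) x := by
    have hfun : (fun t : ℝ => -(2 * p) / (t * u ^ 3))
        = fun t : ℝ => (-(2 * p) / u ^ 3) * t⁻¹ := by funext t; ring
    have hval : 2 * p / (x ^ 2 * u ^ 3) = (-(2 * p) / u ^ 3) * (-(x ^ 2)⁻¹) := by
      field_simp
    rw [hfun, hval]
    exact (hasDerivAt_inv hx).const_mul _
  have h2 : HasDerivAt (fun t : ℝ => 1 / (t ^ 2 * u ^ 2))
      (-2 / (x ^ 3 * u ^ 2)) x := by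
    have hp : HasDerivAt (fun t : ℝ => t ^ 2) (2 * x) x := by
      simpa using hasDerivAt_pow 2 x
    have hfun : (fun t : ℝ => 1 / (t ^ 2 * u ^ 2))
        = fun t : ℝ => (u ^ 2)⁻¹ * (t ^ 2)⁻¹ := by funext t; ring
    have hval : -2 / (x ^ 3 * u ^ 2) = (u ^ 2)⁻¹ * (-(2 * x) / (x ^ 2) ^ 2) := by
      field_simp
    rw [hfun, hval]
    exact (hp.inv (pow_ne_zero 2 hx)).const_mul _
  have h := h1.sub h2
  simp only [pX, a2]
  rw [show (fun t : ℝ => -(2 * p) / (t * u ^ 3) - 1 / (t ^ 2 * u ^ 2)) = (fun t : ℝ => -(2 * p) / (t * u ^ 3)) - (fun t : ℝ => 1 / (t ^ 2 * u ^ 2)) from rfl, h.deriv]; ring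

lemma pU_a2 (x u p q : ℝ) (hx : x ≠ 0) (hu : u ≠ 0) :
    pU a2 x u p q = 6 * p / (x * u ^ 4) + 2 / (x ^ 2 * u ^ 3) := by
  have h1 : HasDerivAt (fun t : ℝ => -(2 * p) / (x * t ^ 3))
      (6 * p / (x * u ^ 4)) u := by
    have hp : HasDerivAt (fun t : ℝ => t ^ 3) (3 * u ^ 2) u := by
      simpa using hasDerivAt_pow 3 u
    have hfun : (fun t : ℝ => -(2 * p) / (x * t ^ 3))
        = fun t : ℝ => (-(2 * p) / x) * (t ^ 3)⁻¹ := by funext t; ring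
    have hval : 6 * p / (x * u ^ 4) = (-(2 * p) / x) * (-(3 * u ^ 2) / (u ^ 3) ^ 2) := by
      field_simp; ring
    rw [hfun, hval]
    exact (hp.inv (pow_ne_zero 3 hu)).const_mul _
  have h2 : HasDerivAt (fun t : ℝ => 1 / (x ^ 2 * t ^ 2))
      (-2 / (x ^ 2 * u ^ 3)) u := by
    have hp : HasDerivAt (fun t : ℝ => t ^ 2) (2 * u) u := by
      simpa using hasDerivAt_pow 2 u
    have hfun : (fun t : ℝ => 1 / (x ^ 2 * t ^ 2))
        = fun t : ℝ => (x ^ 2)⁻¹ * (t ^ 2)⁻¹ := by funext t; ring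
    have hval : -2 / (x ^ 2 * u ^ 3) = (x ^ 2)⁻¹ * (-(2 * u) / (u ^ 2) ^ 2) := by
      field_simp
    rw [hfun, hval]
    exact (hp.inv (pow_ne_zero 2 hu)).const_mul _
  have h := h1.sub h2
  simp only [pU, a2]
  rw [show (fun t : ℝ => -(2 * p) / (x * t ^ 3) - 1 / (x ^ 2 * t ^ 2)) = (fun t : ℝ => -(2 * p) / (x * t ^ 3)) - (fun t : ℝ => 1 / (x ^ 2 * t ^ 2)) from rfl, h.deriv]; ring

lemma pP_a2 (x u p q : ℝ) :
    pP a2 x u p q = -2 / (x * u ^ 3) := by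
  have hfun : (fun t : ℝ => -(2 * t) / (x * u ^ 3) - 1 / (x ^ 2 * u ^ 2))
      = fun t : ℝ => (-2 / (x * u ^ 3)) * t - 1 / (x ^ 2 * u ^ 2) := by
    funext t; ring
  have h : HasDerivAt (fun t : ℝ => (-2 / (x * u ^ 3)) * t - 1 / (x ^ 2 * u ^ 2))
      (-2 / (x * u ^ 3)) p :=
 (((hasDerivAt_id p).const_mul (-2 / (x * u ^ 3))).congr_deriv (mul_one _)).sub_const
      (1 / (x ^ 2 * u ^ 2))
  simp only [pP, a2]
  rw [hfun]
  exact h.deriv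

lemma pQ_a2 (x u p q : ℝ) : pQ a2 x u p q = 0 := by
  simp [pQ, a2]

/-- For `f` of Example 3.1, the function `a₂` satisfies the second auxiliary
equation `Dₓ a₂ = (1/2) x u² a₂² + 4p²/(xu⁴) + 2p/(x²u³) + (3/2)/(x³u²) − 2q/(xu³)`
on the set `x ≠ 0`, `u ≠ 0`. -/
theorem second_auxiliary_equation_example1 :
    ∀ x u p q : ℝ, x ≠ 0 → u ≠ 0 →
      Dx f a2 x u p q
        = (1 / 2) * x * u ^ 2 * (a2 x u p q) ^ 2
          + 4 * p ^ 2 / (x * u ^ 4) + 2 * p / (x ^ 2 * u ^ 3)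
          + (3 / 2) / (x ^ 3 * u ^ 2) - 2 * q / (x * u ^ 3) := by
  intro x u p q hx hu
  rw [Dx, pX_a2 x u p q hx hu, pU_a2 x u p q hx hu, pP_a2, pQ_a2]
  simp only [a2]
  field_simp
  ring
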